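/- arXiv:2107.01909 — 6 statements merged into one kernel-verified Lean document; each statement's English description precedes it below -/
import Mathlib

section
/- Let F be a field of characteristic zero and m ∈ ℕ. Model the differential polynomial ring F{A} in one differential indeterminate A with m commuting derivations as R := MvPolynomial σ F where σ := (Fin m →₀ ℕ), the variable X θ representing the derivative θA. Suppose δ : Fin m → Derivation F R R is a family of derivations satisfying δ i (X θ) = X (θ + Finsupp.single i 1) for all i and θ. For a word w : List (Fin m), let δ_w denote the composite of the derivations δ i for i in w (applied in order). Then for every d ≥ 1, every word w : List (Fin m), and every variable index τ : σ, the partial derivative (pderiv τ) (δ_w ((X 0)^d)) belongs to the differential ideal generated by (X 0)^{d-1}, i.e. to the ideal of R generated by the set {δ_{w'} ((X 0)^{d-1}) : w' a word over Fin m}. -/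
open MvPolynomial

/-- Applying a word `w` of derivations to a polynomial, in order. -/
noncomputable def applyWord {F : Type*} [CommRing F] {m : ℕ}
    (δ : Fin m → Derivation F (MvPolynomial (Fin m →₀ ℕ) F) (MvPolynomial (Fin m →₀ ℕ) F))
    (w : List (Fin m)) (p : MvPolynomial (Fin m →₀ ℕ) F) : MvPolynomial (Fin m →₀ ℕ) F :=
  w.foldr (fun i q => δ i q) p

/-- Commutation relation between formal partial derivatives and the derivations `δ i`. -/
lemma pderiv_comm_delta {F : Type*} [Field F] {m : ℕ}
    (δ : Fin m → Derivation F (MvPolynomial (Fin m →₀ ℕ) F) (MvPolynomial (Fin m →₀ ℕ) F))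
    (hδ : ∀ (i : Fin m) (θ : Fin m →₀ ℕ), δ i (X θ) = X (θ + Finsupp.single i 1))
    (i : Fin m) (τ : Fin m →₀ ℕ) (p : MvPolynomial (Fin m →₀ ℕ) F) :
    pderiv τ (δ i p) = δ i (pderiv τ p)
      + (if τ i = 0 then 0 else pderiv (τ - Finsupp.single i 1) p) := by
  classical
  have key : ⁅(pderiv τ : Derivation F (MvPolynomial (Fin m →₀ ℕ) F) _), δ i⁆
      = (if τ i = 0 then (0 : Derivation F (MvPolynomial (Fin m →₀ ℕ) F) _)
          else pderiv (τ - Finsupp.single i 1)) := by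
    apply derivation_ext
    intro θ
    rw [Derivation.commutator_apply, hδ i θ]
    have hδ0 : δ i (pderiv τ (X θ)) = 0 := by
      rw [pderiv_X]
      rcases eq_or_ne τ θ with h | h <;>
        simp [Pi.single_apply, h]
    rw [hδ0, sub_zero, pderiv_X]
    split_ifs with h1
    · have h2 : τ ≠ θ + Finsupp.single i 1 := by
        intro h
        rw [h] at h1
        simp at h1
      simp [Pi.single_apply, h2]
    · have h4 : τ = θ + Finsupp.single i 1 ↔ τ - Finsupp.single i 1 = θ := by
        constructor
        · intro h; subst h; simp
        · intro h
          subst h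
          exact (tsub_add_cancel_of_le
            (Finsupp.single_le_iff.mpr (Nat.one_le_iff_ne_zero.mpr h1))).symm
      rw [pderiv_X]
      simp only [Pi.single_apply]
      by_cases h3 : θ + Finsupp.single i 1 = τ
      · rw [if_pos h3, if_pos (h4.mp h3.symm).symm]
      · rw [if_neg h3, if_neg (fun h => h3 (h4.mpr h.symm).symm)]
  have h := congrArg (fun D => D p) key
  simp only [Derivation.commutator_apply] at h
  split_ifs at h ⊢ with h0
  · simp only [Derivation.zero_apply] at h
    rw [add_zero]
    linear_combination (norm := module) h
  · linear_combination (norm := module) h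

/-- The differential ideal generated by `(X 0)^e` is closed under each `δ i`. -/
lemma span_closed_delta {F : Type*} [Field F] {m : ℕ}
    (δ : Fin m → Derivation F (MvPolynomial (Fin m →₀ ℕ) F) (MvPolynomial (Fin m →₀ ℕ) F))
    (e : ℕ) (i : Fin m) {p : MvPolynomial (Fin m →₀ ℕ) F}
    (hp : p ∈ Ideal.span { q : MvPolynomial (Fin m →₀ ℕ) F |
        ∃ w' : List (Fin m), q = applyWord δ w' ((X 0) ^ e) }) :
    δ i p ∈ Ideal.span { q : MvPolynomial (Fin m →₀ ℕ) F |
        ∃ w' : List (Fin m), q = applyWord δ w' ((X 0) ^ e) } := by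
  set S := { q : MvPolynomial (Fin m →₀ ℕ) F |
      ∃ w' : List (Fin m), q = applyWord δ w' ((X 0) ^ e) } with hS
  refine Submodule.span_induction (p := fun x _ => δ i x ∈ Ideal.span S)
    ?_ ?_ ?_ ?_ hp
  · rintro x ⟨w', rfl⟩
    exact Ideal.subset_span ⟨i :: w', rfl⟩
  · simp
  · intro x y _ _ hx hy
    rw [map_add]
    exact Ideal.add_mem _ hx hy
  · intro a x hx hax
    rw [smul_eq_mul, Derivation.leibniz]
    refine Submodule.add_mem _ (Submodule.smul_mem _ _ hax) ?_
    rw [smul_eq_mul, mul_comm]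
    exact Ideal.mul_mem_left _ _ hx

/-- Lemma 3(ii)(a): in the differential polynomial ring `F{A}` (modelled as the
multivariate polynomial ring with variables indexed by multi-indices `θ : Fin m →₀ ℕ`,
the variable `X θ` representing `θA`), for every derivative operator `θ` (a word `w`),
every variable `τA` and every `d ≥ 1`, the partial derivative `∂_{τA} θ(A^d)` belongs
to the differential ideal generated by `A^(d-1)`. -/
theorem pderiv_applyWord_pow_mem_differential_ideal
    (F : Type*) [Field F] [CharZero F] (m : ℕ)
    (δ : Fin m → Derivation F (MvPolynomial (Fin m →₀ ℕ) F) (MvPolynomial (Fin m →₀ ℕ) F))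
    (hδ : ∀ (i : Fin m) (θ : Fin m →₀ ℕ),
      δ i (X θ) = X (θ + Finsupp.single i 1))
    (d : ℕ) (hd : 1 ≤ d) (w : List (Fin m)) (τ : Fin m →₀ ℕ) :
    (pderiv τ) (applyWord δ w ((X 0) ^ d)) ∈
      Ideal.span { q : MvPolynomial (Fin m →₀ ℕ) F |
        ∃ w' : List (Fin m), q = applyWord δ w' ((X 0) ^ (d - 1)) } := by
  induction w generalizing τ with
  | nil =>
    simp only [applyWord, List.foldr_nil]
    rw [(pderiv τ).leibniz_pow]
    have hgen : (X 0 : MvPolynomial (Fin m →₀ ℕ) F) ^ (d - 1) ∈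
        Ideal.span { q : MvPolynomial (Fin m →₀ ℕ) F |
          ∃ w' : List (Fin m), q = applyWord δ w' ((X 0) ^ (d - 1)) } :=
      Ideal.subset_span ⟨[], rfl⟩
    rw [nsmul_eq_mul, smul_eq_mul]
    exact Ideal.mul_mem_left _ _ (Ideal.mul_mem_right _ _ hgen)
  | cons i w ih =>
    have hfold : applyWord δ (i :: w) ((X 0) ^ d) = δ i (applyWord δ w ((X 0) ^ d)) := rfl
    rw [hfold, pderiv_comm_delta δ hδ i τ]
    refine Submodule.add_mem _ (span_closed_delta δ _ i (ih τ)) ?_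
    split_ifs with h0
    · exact Submodule.zero_mem _
    · exact ih _
end

section
/- Let K be a field of characteristic zero. Work in the bivariate polynomial ring K[x,y] (MvPolynomial (Fin 2) K). Let a₁, …, a_{r₁} ∈ K be pairwise distinct, b₁, …, b_{r₂} ∈ K pairwise distinct, and let d_{1,k} ≥ 1 (1 ≤ k ≤ r₁) and d_{2,k} ≥ 1 (1 ≤ k ≤ r₂) be integers. Suppose R ∈ K[x,y] satisfies: (1) deg_x R < Σ_{k=1}^{r₁} d_{1,k} and deg_y R < Σ_{k=1}^{r₂} d_{2,k}; and (2) for every pair (k₁,k₂), R belongs to the ideal of K[x,y] generated by (x − a_{k₁})^{d_{1,k₁}} and (y − b_{k₂})^{d_{2,k₂}}. Then R = 0. -/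
open MvPolynomial

/-- Univariate key lemma: a polynomial divisible by powers of `X - C (c k)` with pairwise
unit differences, of total degree bound, is zero. -/
lemma univ_hermite_key {A : Type*} [CommRing A] [Nontrivial A] {r : ℕ} (c : Fin r → A)
    (hc : ∀ i j : Fin r, i ≠ j → IsUnit (c i - c j)) (d : Fin r → ℕ)
    (p : Polynomial A) (hdeg : p.natDegree < ∑ k, d k)
    (hdvd : ∀ k, (Polynomial.X - Polynomial.C (c k)) ^ (d k) ∣ p) : p = 0 := by
  have hco : (↑(Finset.univ : Finset (Fin r)) : Set (Fin r)).Pairwise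
      (Function.onFun IsCoprime fun k => (Polynomial.X - Polynomial.C (c k)) ^ (d k)) := by
    intro i _ j _ hij
    exact (Polynomial.isCoprime_X_sub_C_of_isUnit_sub (hc i j hij)).pow
  have hprod : (∏ k, (Polynomial.X - Polynomial.C (c k)) ^ (d k)) ∣ p :=
    Finset.prod_dvd_of_coprime hco (fun k _ => hdvd k)
  obtain ⟨t, rfl⟩ := hprod
  rcases eq_or_ne t 0 with rfl | ht
  · simp
  · exfalso
    have hmon : (∏ k, (Polynomial.X - Polynomial.C (c k)) ^ (d k)).Monic :=
      Polynomial.monic_prod_of_monic _ _ fun k _ => (Polynomial.monic_X_sub_C (c k)).pow _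
    have hnd : (∏ k, (Polynomial.X - Polynomial.C (c k)) ^ (d k)).natDegree = ∑ k, d k := by
      rw [Polynomial.natDegree_prod_of_monic _ _
        (fun k _ => (Polynomial.monic_X_sub_C (c k)).pow _)]
      exact Finset.sum_congr rfl fun k _ => by
        rw [(Polynomial.monic_X_sub_C (c k)).natDegree_pow, Polynomial.natDegree_X_sub_C, mul_one]
    rw [Polynomial.natDegree_mul' (by
      rw [hmon.leadingCoeff, one_mul]
      exact Polynomial.leadingCoeff_ne_zero.mpr ht), hnd] at hdeg
    omega

/-- Bivariate Hermite interpolation uniqueness (key step of Theorem 4(ii)):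
a polynomial `R` of small bidegree lying in all primary ideals
`((x - a k₁)^(d₁ k₁), (y - b k₂)^(d₂ k₂))` is zero. -/
theorem bivariate_hermite_uniqueness
    (K : Type*) [Field K] [CharZero K]
    (r₁ r₂ : ℕ) (a : Fin r₁ → K) (b : Fin r₂ → K)
    (ha : Function.Injective a) (hb : Function.Injective b)
    (d₁ : Fin r₁ → ℕ) (d₂ : Fin r₂ → ℕ)
    (hd₁ : ∀ k, 1 ≤ d₁ k) (hd₂ : ∀ k, 1 ≤ d₂ k)
    (R : MvPolynomial (Fin 2) K)
    (hdegx : R.degreeOf 0 < ∑ k, d₁ k)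
    (hdegy : R.degreeOf 1 < ∑ k, d₂ k)
    (hmem : ∀ (k₁ : Fin r₁) (k₂ : Fin r₂),
      R ∈ Ideal.span ({(X 0 - C (a k₁)) ^ (d₁ k₁), (X 1 - C (b k₂)) ^ (d₂ k₂)} :
        Set (MvPolynomial (Fin 2) K))) :
    R = 0 := by
  classical
  -- inner equivalence `K[Fin 1] ≃ K[X]`
  set ψ : MvPolynomial (Fin 1) K ≃ₐ[K] Polynomial K :=
    (finSuccEquiv K 0).trans (Polynomial.mapAlgEquiv (isEmptyAlgEquiv K (Fin 0))) with hψ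
  have hψnat : ∀ q : MvPolynomial (Fin 1) K, (ψ q).natDegree = q.degreeOf 0 := by
    intro q
    have : ψ q = Polynomial.map ((isEmptyAlgEquiv K (Fin 0)) : MvPolynomial (Fin 0) K →+* K)
        (finSuccEquiv K 0 q) := rfl
    have h2 : (Polynomial.map ((isEmptyAlgEquiv K (Fin 0)) : MvPolynomial (Fin 0) K →+* K)
        ((finSuccEquiv K 0) q)).natDegree = ((finSuccEquiv K 0) q).natDegree :=
      Polynomial.natDegree_map_eq_of_injective (isEmptyAlgEquiv K (Fin 0)).injective _
    rw [this, h2, natDegree_finSuccEquiv]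
  have hψX : ψ (X 0) = Polynomial.X := by
    have : ψ (X 0) = Polynomial.map ((isEmptyAlgEquiv K (Fin 0)) : MvPolynomial (Fin 0) K →+* K)
        (finSuccEquiv K 0 (X 0)) := rfl
    rw [this, finSuccEquiv_X_zero, Polynomial.map_X]
  -- full equivalence
  set Φ : MvPolynomial (Fin 2) K ≃ₐ[K] Polynomial (Polynomial K) :=
    (finSuccEquiv K 1).trans (Polynomial.mapAlgEquiv ψ) with hΦ
  have hΦX0 : Φ (X 0) = Polynomial.X := by
    have : Φ (X 0) = Polynomial.map (ψ : MvPolynomial (Fin 1) K →+* Polynomial K)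
        (finSuccEquiv K 1 (X 0)) := rfl
    rw [this, finSuccEquiv_X_zero, Polynomial.map_X]
  have hΦX1 : Φ (X 1) = Polynomial.C Polynomial.X := by
    have h1 : (1 : Fin 2) = Fin.succ 0 := rfl
    have : Φ (X 1) = Polynomial.map (ψ : MvPolynomial (Fin 1) K →+* Polynomial K)
        (finSuccEquiv K 1 (X 1)) := rfl
    rw [this, h1, finSuccEquiv_X_succ, Polynomial.map_C]
    rw [show ((ψ : MvPolynomial (Fin 1) K →+* Polynomial K) (X 0)) = ψ (X 0) from rfl, hψX]
  have hΦC : ∀ x : K, Φ (C x) = Polynomial.C (Polynomial.C x) := by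
    intro x
    have : (C x : MvPolynomial (Fin 2) K) = algebraMap K _ x := rfl
    rw [this, AlgEquiv.commutes]
    rfl
  set P : Polynomial (Polynomial K) := Φ R with hP
  -- degree facts about P
  have hPnat : P.natDegree = R.degreeOf 0 := by
    have : P = Polynomial.map (ψ : MvPolynomial (Fin 1) K →+* Polynomial K)
        (finSuccEquiv K 1 R) := rfl
    have h2 : (Polynomial.map (ψ : MvPolynomial (Fin 1) K →+* Polynomial K)
        ((finSuccEquiv K 1) R)).natDegree = ((finSuccEquiv K 1) R).natDegree :=
      Polynomial.natDegree_map_eq_of_injective ψ.injective _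
    rw [this, h2, natDegree_finSuccEquiv]
  have hPcoeff : ∀ i : ℕ, (P.coeff i).natDegree ≤ R.degreeOf 1 := by
    intro i
    have : P.coeff i = ψ ((finSuccEquiv K 1 R).coeff i) := by
      have : P = Polynomial.map (ψ : MvPolynomial (Fin 1) K →+* Polynomial K)
          (finSuccEquiv K 1 R) := rfl
      rw [this, Polynomial.coeff_map]; rfl
    rw [this, hψnat]
    have := degreeOf_coeff_finSuccEquiv R 0 i
    simpa using this
  -- Step 1: for each k₂ and i, (X - C (b k₂))^(d₂ k₂) ∣ P.coeff i
  have step1 : ∀ (k₂ : Fin r₂) (i : ℕ),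
      (Polynomial.X - Polynomial.C (b k₂)) ^ (d₂ k₂) ∣ P.coeff i := by
    intro k₂ i
    set f : Polynomial K := (Polynomial.X - Polynomial.C (b k₂)) ^ (d₂ k₂) with hf
    set I : Ideal (Polynomial K) := Ideal.span {f} with hI
    have hInetop : I ≠ ⊤ := by
      rw [hI, Ne, Ideal.span_singleton_eq_top]
      intro hu
      have : 0 < f.natDegree := by
        rw [hf, Polynomial.natDegree_pow, Polynomial.natDegree_X_sub_C, mul_one]
        exact hd₂ k₂
      exact Polynomial.not_isUnit_of_natDegree_pos f this hu
    haveI : Nontrivial (Polynomial K ⧸ I) := Ideal.Quotient.nontrivial_iff.mpr hInetop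
    set mk : Polynomial K →+* Polynomial K ⧸ I := Ideal.Quotient.mk I with hmk
    set π : Polynomial (Polynomial K) →+* Polynomial (Polynomial K ⧸ I) :=
      Polynomial.mapRingHom mk with hπ
    -- π P is divisible by each (X - C (mk (C (a k₁))))^(d₁ k₁)
    have hdvd : ∀ k₁ : Fin r₁,
        (Polynomial.X - Polynomial.C (mk (Polynomial.C (a k₁)))) ^ (d₁ k₁) ∣ π P := by
      intro k₁
      obtain ⟨u, v, huv⟩ := Ideal.mem_span_pair.mp (hmem k₁ k₂)
      have hΦR : Φ u * (Polynomial.X - Polynomial.C (Polynomial.C (a k₁))) ^ (d₁ k₁)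
          + Φ v * Polynomial.C ((Polynomial.X - Polynomial.C (b k₂)) ^ (d₂ k₂)) = P := by
        have := congrArg Φ huv
        simpa [map_add, map_mul, map_pow, map_sub, hΦX0, hΦX1, hΦC] using this
      have hπP : π P = π (Φ u) *
          (Polynomial.X - Polynomial.C (mk (Polynomial.C (a k₁)))) ^ (d₁ k₁) := by
        have h2 : π (Polynomial.C ((Polynomial.X - Polynomial.C (b k₂)) ^ (d₂ k₂))) = 0 := by
          rw [hπ, Polynomial.coe_mapRingHom, Polynomial.map_C]
          have : mk ((Polynomial.X - Polynomial.C (b k₂)) ^ (d₂ k₂)) = 0 := by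
            rw [hmk, Ideal.Quotient.eq_zero_iff_mem, hI]
            exact Ideal.subset_span rfl
          rw [this, Polynomial.C_0]
        have h3 : π ((Polynomial.X - Polynomial.C (Polynomial.C (a k₁))) ^ (d₁ k₁)) =
            (Polynomial.X - Polynomial.C (mk (Polynomial.C (a k₁)))) ^ (d₁ k₁) := by
          rw [hπ, Polynomial.coe_mapRingHom, Polynomial.map_pow, Polynomial.map_sub,
            Polynomial.map_X, Polynomial.map_C]
        rw [← hΦR, map_add, map_mul, map_mul, h2, h3, mul_zero, add_zero]
      exact ⟨π (Φ u), by rw [hπP]; exact mul_comm (π (Φ u)) _⟩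
    -- units
    have hunits : ∀ i j : Fin r₁, i ≠ j →
        IsUnit (mk (Polynomial.C (a i)) - mk (Polynomial.C (a j))) := by
      intro i j hij
      rw [← map_sub, ← Polynomial.C_sub]
      exact (Polynomial.isUnit_C.mpr (isUnit_iff_ne_zero.mpr
        (sub_ne_zero.mpr (fun h => hij (ha h))))).map mk
    have hdeg : (π P).natDegree < ∑ k, d₁ k := by
      calc (π P).natDegree ≤ P.natDegree := Polynomial.natDegree_map_le
        _ = R.degreeOf 0 := hPnat
        _ < ∑ k, d₁ k := hdegx
    have hzero : π P = 0 :=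
      univ_hermite_key (fun k₁ => mk (Polynomial.C (a k₁))) hunits d₁ (π P) hdeg hdvd
    -- conclude divisibility of coefficients
    have : mk (P.coeff i) = 0 := by
      have : (π P).coeff i = mk (P.coeff i) := by
        rw [hπ, Polynomial.coe_mapRingHom, Polynomial.coeff_map]
      rw [← this, hzero, Polynomial.coeff_zero]
    rw [hmk, Ideal.Quotient.eq_zero_iff_mem, hI, Ideal.mem_span_singleton] at this
    exact this
  -- Step 2: each coefficient of P is zero
  have step2 : ∀ i : ℕ, P.coeff i = 0 := by
    intro i
    refine univ_hermite_key b (fun i j hij => isUnit_iff_ne_zero.mpr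
      (sub_ne_zero.mpr (fun h => hij (hb h)))) d₂ (P.coeff i) ?_ (fun k₂ => step1 k₂ i)
    exact lt_of_le_of_lt (hPcoeff i) hdegy
  have : P = 0 := Polynomial.ext fun i => by rw [step2 i, Polynomial.coeff_zero]
  have hR0 : Φ R = Φ 0 := by rw [map_zero, ← hP]; exact this
  exact Φ.injective hR0
end

section
/- Let K be a field, s ≥ 1, c : Fin s → K, and d : Fin s → ℕ with d i ≥ 1 for all i. Work in K[x₁,…,x_s] (MvPolynomial (Fin s) K). Suppose f belongs to the ideal generated by the polynomials (x_i − c_i)^{d_i} for 1 ≤ i ≤ s, and suppose that deg_{x_i} f < d_i for every i. Then f = 0. -/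
open MvPolynomial

/-- Applying the shift `x_i ↦ x_i + c_i` does not increase the degree in any variable. -/
theorem degreeOf_shift_le (K : Type*) [Field K] (s : ℕ) (c : Fin s → K)
    (f : MvPolynomial (Fin s) K) (j : Fin s) :
    degreeOf j (aeval (fun i => X i + C (c i)) f) ≤ degreeOf j f := by
  rw [aeval_def, eval₂_eq]
  refine le_trans (degreeOf_sum_le _ _ _) (Finset.sup_le fun a ha => ?_)
  refine le_trans (degreeOf_mul_le _ _ _) ?_
  rw [algebraMap_eq, degreeOf_C, zero_add]
  refine le_trans (degreeOf_prod_le _ _ _) ?_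
  have key : ∀ n : Fin s, degreeOf j ((X n + C (c n) : MvPolynomial (Fin s) K) ^ (a n))
      ≤ if j = n then a n else 0 := by
    intro n
    refine le_trans (degreeOf_pow_le _ _ _) ?_
    have h1 : degreeOf j (X n + C (c n) : MvPolynomial (Fin s) K) ≤ if j = n then 1 else 0 := by
      refine le_trans (degreeOf_add_le _ _ _) ?_
      rw [degreeOf_C, degreeOf_X]
      simp
    calc a n * degreeOf j (X n + C (c n) : MvPolynomial (Fin s) K)
        ≤ a n * (if j = n then 1 else 0) := Nat.mul_le_mul_left _ h1
      _ = if j = n then a n else 0 := by split <;> simp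
  refine le_trans (Finset.sum_le_sum fun n _ => key n) ?_
  rw [Finset.sum_ite_eq]
  split
  · exact monomial_le_degreeOf j ha
  · exact Nat.zero_le _

/-- Algebraic content of the final claim of Lemma 3(ii)(c): a polynomial in the
ideal generated by the `(x_i - c_i)^(d_i)` whose degree in each `x_i` is `< d_i`
must vanish. -/
theorem eq_zero_of_mem_ideal_of_degreeOf_lt
    (K : Type*) [Field K]
    (s : ℕ) (hs : 1 ≤ s) (c : Fin s → K) (d : Fin s → ℕ) (hd : ∀ i, 1 ≤ d i)
    (f : MvPolynomial (Fin s) K)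
    (hf : f ∈ Ideal.span (Set.range fun i : Fin s => (X i - C (c i)) ^ (d i)))
    (hdeg : ∀ i : Fin s, f.degreeOf i < d i) :
    f = 0 := by
  set ψ : MvPolynomial (Fin s) K →ₐ[K] MvPolynomial (Fin s) K :=
    aeval (fun i => X i + C (c i)) with hψ
  set g : MvPolynomial (Fin s) K := ψ f with hgdef
  have hmap : g ∈ Ideal.map (ψ : MvPolynomial (Fin s) K →+* MvPolynomial (Fin s) K)
      (Ideal.span (Set.range fun i : Fin s => (X i - C (c i)) ^ (d i))) :=
    Ideal.mem_map_of_mem _ hf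
  rw [Ideal.map_span] at hmap
  have himg : (ψ : MvPolynomial (Fin s) K →+* MvPolynomial (Fin s) K) ''
      (Set.range fun i : Fin s => (X i - C (c i)) ^ (d i))
      = (fun m => monomial m (1 : K)) '' (Set.range fun i : Fin s => Finsupp.single i (d i)) := by
    rw [← Set.range_comp, ← Set.range_comp]
    refine congrArg _ (funext fun i => ?_)
    simp only [Function.comp_apply, map_pow, map_sub, hψ, AlgHom.coe_toRingHom, aeval_X,
      aeval_C, algebraMap_eq, add_sub_cancel_right, X_pow_eq_monomial]
  rw [himg] at hmap
  rw [mem_ideal_span_monomial_image] at hmap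
  have hg0 : g = 0 := by
    by_contra hg0
    obtain ⟨m, hm⟩ := Finset.nonempty_of_ne_empty (fun h => hg0 (support_eq_empty.mp h))
    obtain ⟨si, ⟨i, rfl⟩, hle⟩ := hmap m hm
    have h1 : d i ≤ m i := by simpa using hle i
    have h2 : m i ≤ degreeOf i g := monomial_le_degreeOf i hm
    have h3 : degreeOf i g ≤ degreeOf i f := degreeOf_shift_le K s c f i
    exact absurd (hdeg i) (not_lt.mpr (h1.trans (h2.trans h3)))
  have : aeval (fun i => X i - C (c i) : Fin s → MvPolynomial (Fin s) K) g = f := by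
    rw [hgdef, hψ, ← AlgHom.comp_apply]
    have : (aeval (fun i => X i - C (c i) : Fin s → MvPolynomial (Fin s) K)).comp
        (aeval (fun i => X i + C (c i) : Fin s → MvPolynomial (Fin s) K))
        = AlgHom.id K (MvPolynomial (Fin s) K) := by
      refine algHom_ext fun i => ?_
      simp
    rw [this]; rfl
  rw [← this, hg0, map_zero]
end

section
/- Let K be a field, a₁, …, a_{r₁} ∈ K pairwise distinct and b₁, …, b_{r₂} ∈ K pairwise distinct. In K[x,y] (MvPolynomial (Fin 2) K), set Q₁ := ∏_{j=1}^{r₁} (x − a_j) and Q₂ := ∏_{k=1}^{r₂} (y − b_k). Then the ideal generated by Q₁ and Q₂ equals the intersection ⋂_{j=1}^{r₁} ⋂_{k=1}^{r₂} (x − a_j, y − b_k) of the maximal ideals generated by x − a_j and y − b_k; in particular, the ideal (Q₁, Q₂) is a radical ideal. -/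
open MvPolynomial

section IdealLemmas
variable {R : Type*} [CommRing R]

lemma sup_inf_sup_of_coprime (I J G : Ideal R) (h : I ⊔ J = ⊤) :
    (I ⊔ G) ⊓ (J ⊔ G) = I * J ⊔ G := by
  apply le_antisymm
  · intro x hx
    obtain ⟨hx1, hx2⟩ := hx
    obtain ⟨i, hi, j, hj, hij⟩ := Submodule.mem_sup.mp (h ▸ Submodule.mem_top (x := (1 : R)))
    have hx' : x = i * x + j * x := by rw [← add_mul, hij, one_mul]
    rw [hx']
    have h1 : i * x ∈ I * J ⊔ G := by
      have := Ideal.mul_mem_mul hi hx2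
      rw [Ideal.mul_sup] at this
      exact (sup_le_sup (le_refl (I*J)) Ideal.mul_le_right : I * J ⊔ I * G ≤ I * J ⊔ G) this
    have h2 : j * x ∈ I * J ⊔ G := by
      have := Ideal.mul_mem_mul hj hx1
      rw [Ideal.mul_sup] at this
      refine (sup_le_sup ?_ Ideal.mul_le_right : J * I ⊔ J * G ≤ I * J ⊔ G) this
      rw [mul_comm]
    exact Ideal.add_mem _ h1 h2
  · exact sup_le (le_inf (le_sup_of_le_left Ideal.mul_le_left)
      (le_sup_of_le_left Ideal.mul_le_right)) (le_inf le_sup_right le_sup_right)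

lemma iInf_sup_eq_prod_sup {ι : Type*} (s : Finset ι) (I : ι → Ideal R) (G : Ideal R)
    (h : ∀ i ∈ s, ∀ j ∈ s, i ≠ j → I i ⊔ I j = ⊤) :
    (⨅ i ∈ s, (I i ⊔ G)) = (∏ i ∈ s, I i) ⊔ G := by
  classical
  induction s using Finset.induction_on with
  | empty => simp
  | @insert c s hc ih =>
    rw [Finset.iInf_insert, Finset.prod_insert hc,
      ih (fun i hi j hj hij => h i (Finset.mem_insert_of_mem hi) j (Finset.mem_insert_of_mem hj) hij)]
    exact sup_inf_sup_of_coprime _ _ _ (Ideal.sup_prod_eq_top fun i hi =>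
      h c (Finset.mem_insert_self c s) i (Finset.mem_insert_of_mem hi) (fun e => hc (e ▸ hi)))

end IdealLemmas

section Eval
variable {K : Type*} [Field K]

lemma sub_C_eval_mem (v : Fin 2 → K) (f : MvPolynomial (Fin 2) K) :
    f - C (eval v f) ∈ Ideal.span ({X 0 - C (v 0), X 1 - C (v 1)} : Set (MvPolynomial (Fin 2) K)) := by
  set I := Ideal.span ({X 0 - C (v 0), X 1 - C (v 1)} : Set (MvPolynomial (Fin 2) K)) with hI
  induction f using MvPolynomial.induction_on with
  | C a => simp
  | add p q hp hq =>
    have : p + q - C (eval v (p + q)) = (p - C (eval v p)) + (q - C (eval v q)) := by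
      rw [map_add, map_add]; ring
    rw [this]; exact Ideal.add_mem _ hp hq
  | mul_X p n hp =>
    have : p * X n - C (eval v (p * X n)) =
        p * (X n - C (v n)) + C (v n) * (p - C (eval v p)) := by
      rw [map_mul, eval_X, map_mul]; ring
    rw [this]
    refine Ideal.add_mem _ (Ideal.mul_mem_left _ _ ?_) (Ideal.mul_mem_left _ _ hp)
    fin_cases n
    · exact Ideal.subset_span (Set.mem_insert _ _)
    · exact Ideal.subset_span (Set.mem_insert_of_mem _ rfl)

lemma span_pair_eq_ker (v : Fin 2 → K) :
    Ideal.span ({X 0 - C (v 0), X 1 - C (v 1)} : Set (MvPolynomial (Fin 2) K)) =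
      RingHom.ker (eval v) := by
  apply le_antisymm
  · rw [Ideal.span_le]
    rintro p (rfl | rfl) <;> simp [RingHom.mem_ker]
  · intro f hf
    rw [RingHom.mem_ker] at hf
    have := sub_C_eval_mem v f
    rwa [hf, map_zero, sub_zero] at this

lemma span_pair_isMaximal (v : Fin 2 → K) :
    (Ideal.span ({X 0 - C (v 0), X 1 - C (v 1)} : Set (MvPolynomial (Fin 2) K))).IsMaximal := by
  rw [span_pair_eq_ker]
  exact RingHom.ker_isMaximal_of_surjective _ (fun k => ⟨C k, eval_C k⟩)

lemma span_single_coprime {σ : Type*} (i : σ) {c d : K} (h : c ≠ d) :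
    Ideal.span ({X i - C c} : Set (MvPolynomial σ K)) ⊔
      Ideal.span ({X i - C d} : Set (MvPolynomial σ K)) = ⊤ := by
  rw [Ideal.eq_top_iff_one]
  have hmem : (C (d - c) : MvPolynomial σ K) ∈
      Ideal.span ({X i - C c} : Set (MvPolynomial σ K)) ⊔
        Ideal.span ({X i - C d} : Set (MvPolynomial σ K)) := by
    have : (C (d - c) : MvPolynomial σ K) = (X i - C c) - (X i - C d) := by
      rw [map_sub]; ring
    rw [this]
    exact sub_mem (Ideal.mem_sup_left (Ideal.subset_span rfl))
      (Ideal.mem_sup_right (Ideal.subset_span rfl))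
  have h1 : (1 : MvPolynomial σ K) = C ((d - c)⁻¹) * C (d - c) := by
    rw [← C_mul, inv_mul_cancel₀ (sub_ne_zero.mpr (Ne.symm h)), C_1]
  rw [h1]
  exact Ideal.mul_mem_left _ _ hmem

end Eval

/-- Lemma 2(ii), equation (1): the ideal generated by the two squarefree products
`Q₁ = ∏ (x - a_j)` and `Q₂ = ∏ (y - b_k)` equals the intersection of the maximal
ideals `(x - a_j, y - b_k)`; in particular it is radical. -/
theorem span_products_eq_inf_and_isRadical
    (K : Type*) [Field K]
    (r₁ r₂ : ℕ) (a : Fin r₁ → K) (b : Fin r₂ → K)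
    (ha : Function.Injective a) (hb : Function.Injective b) :
    Ideal.span ({∏ j, (X 0 - C (a j)), ∏ k, (X 1 - C (b k))} :
        Set (MvPolynomial (Fin 2) K)) =
      ⨅ (j : Fin r₁), ⨅ (k : Fin r₂),
        Ideal.span ({X 0 - C (a j), X 1 - C (b k)} : Set (MvPolynomial (Fin 2) K)) ∧
    (Ideal.span ({∏ j, (X 0 - C (a j)), ∏ k, (X 1 - C (b k))} :
        Set (MvPolynomial (Fin 2) K))).IsRadical := by
  have heq : Ideal.span ({∏ j, (X 0 - C (a j)), ∏ k, (X 1 - C (b k))} :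
        Set (MvPolynomial (Fin 2) K)) =
      ⨅ (j : Fin r₁), ⨅ (k : Fin r₂),
        Ideal.span ({X 0 - C (a j), X 1 - C (b k)} : Set (MvPolynomial (Fin 2) K)) := by
    have hpair : ∀ (j : Fin r₁) (k : Fin r₂),
        Ideal.span ({X 0 - C (a j), X 1 - C (b k)} : Set (MvPolynomial (Fin 2) K)) =
          Ideal.span ({X 1 - C (b k)} : Set (MvPolynomial (Fin 2) K)) ⊔
            Ideal.span ({X 0 - C (a j)} : Set (MvPolynomial (Fin 2) K)) := by
      intro j k
      rw [Ideal.span_insert, sup_comm]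
    have hinner : ∀ (j : Fin r₁),
        (⨅ (k : Fin r₂),
          Ideal.span ({X 0 - C (a j), X 1 - C (b k)} : Set (MvPolynomial (Fin 2) K))) =
        Ideal.span ({∏ k, (X 1 - C (b k))} : Set (MvPolynomial (Fin 2) K)) ⊔
          Ideal.span ({X 0 - C (a j)} : Set (MvPolynomial (Fin 2) K)) := by
      intro j
      have := iInf_sup_eq_prod_sup (Finset.univ : Finset (Fin r₂))
        (fun k => Ideal.span ({X 1 - C (b k)} : Set (MvPolynomial (Fin 2) K)))
        (Ideal.span ({X 0 - C (a j)} : Set (MvPolynomial (Fin 2) K)))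
        (fun i _ k _ hik => span_single_coprime 1 (fun e => hik (hb e)))
      simp only [Finset.mem_univ, iInf_pos, iInf_true] at this
      rw [← Ideal.prod_span_singleton] at *
      calc (⨅ (k : Fin r₂),
          Ideal.span ({X 0 - C (a j), X 1 - C (b k)} : Set (MvPolynomial (Fin 2) K)))
          = ⨅ (k : Fin r₂), (Ideal.span ({X 1 - C (b k)} : Set (MvPolynomial (Fin 2) K)) ⊔
              Ideal.span ({X 0 - C (a j)} : Set (MvPolynomial (Fin 2) K))) := by
            exact iInf_congr (fun k => hpair j k)
        _ = _ := by rw [← this]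
    calc Ideal.span ({∏ j, (X 0 - C (a j)), ∏ k, (X 1 - C (b k))} :
            Set (MvPolynomial (Fin 2) K))
        = Ideal.span ({∏ j, (X 0 - C (a j))} : Set (MvPolynomial (Fin 2) K)) ⊔
            Ideal.span ({∏ k, (X 1 - C (b k))} : Set (MvPolynomial (Fin 2) K)) := by
          rw [Ideal.span_insert]
      _ = ⨅ (j : Fin r₁), (Ideal.span ({X 0 - C (a j)} : Set (MvPolynomial (Fin 2) K)) ⊔
            Ideal.span ({∏ k, (X 1 - C (b k))} : Set (MvPolynomial (Fin 2) K))) := by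
          have := iInf_sup_eq_prod_sup (Finset.univ : Finset (Fin r₁))
            (fun j => Ideal.span ({X 0 - C (a j)} : Set (MvPolynomial (Fin 2) K)))
            (Ideal.span ({∏ k, (X 1 - C (b k))} : Set (MvPolynomial (Fin 2) K)))
            (fun i _ j _ hij => span_single_coprime 0 (fun e => hij (ha e)))
          simp only [Finset.mem_univ, iInf_pos, iInf_true] at this
          rw [this, Ideal.prod_span_singleton]
      _ = _ := by
          refine iInf_congr (fun j => ?_)
          rw [hinner j, sup_comm]
  refine ⟨heq, ?_⟩
  rw [heq]
  exact Ideal.isRadical_iInf _ fun j => Ideal.isRadical_iInf _ fun k =>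
    ((span_pair_isMaximal (K := K) ![a j, b k]).isPrime).isRadical
end

section
/- Let K be a field of characteristic zero, a₁, …, a_{r₁} ∈ K pairwise distinct and b₁, …, b_{r₂} ∈ K pairwise distinct. In K[x,y] (MvPolynomial (Fin 2) K), set Q₁ := ∏_{j=1}^{r₁} (x − a_j), Q₂ := ∏_{k=1}^{r₂} (y − b_k), and let S := (∂_x Q₁)·(∂_y Q₂) be the product of the separants. Then the ideal (Q₁, Q₂) is saturated with respect to S: for every f ∈ K[x,y] and every n ∈ ℕ, if S^n · f belongs to the ideal generated by Q₁ and Q₂, then f itself belongs to that ideal. Equivalently, (Q₁, Q₂) : S^∞ = (Q₁, Q₂). -/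
open MvPolynomial

lemma pderiv_aeval_X {K : Type*} [CommRing K] (i : Fin 2) (p : Polynomial K) :
    pderiv i (Polynomial.aeval (X i : MvPolynomial (Fin 2) K) p) =
      Polynomial.aeval (X i : MvPolynomial (Fin 2) K) p.derivative := by
  induction p using Polynomial.induction_on with
  | C a => simp
  | add p q hp hq => simp [hp, hq]
  | monomial m a _ =>
    simp only [map_mul, map_pow, Polynomial.aeval_C, Polynomial.aeval_X,
      Polynomial.derivative_mul, Polynomial.derivative_C, Polynomial.derivative_X_pow,
      pderiv_mul, pderiv_C, pderiv_pow, pderiv_X_self, map_natCast, algebraMap_eq,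
      zero_mul, zero_add]
    ring

set_option synthInstance.maxHeartbeats 1000000 in
/-- Saturation claim `(Q) : S_Q^∞ = (Q)` from the proof of Lemma 2(ii):
the ideal `(Q₁, Q₂)` of the squarefree products is saturated with respect to
the product of the separants `S = (∂_x Q₁)(∂_y Q₂)`. -/
theorem span_products_saturated_wrt_separant
    (K : Type*) [Field K] [CharZero K]
    (r₁ r₂ : ℕ) (a : Fin r₁ → K) (b : Fin r₂ → K)
    (ha : Function.Injective a) (hb : Function.Injective b)
    (f : MvPolynomial (Fin 2) K) (n : ℕ)
    (hf : (pderiv (0 : Fin 2) (∏ j, (X 0 - C (a j))) *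
            pderiv (1 : Fin 2) (∏ k, (X 1 - C (b k)))) ^ n * f ∈
          Ideal.span ({∏ j, (X 0 - C (a j)), ∏ k, (X 1 - C (b k))} :
            Set (MvPolynomial (Fin 2) K))) :
    f ∈ Ideal.span ({∏ j, (X 0 - C (a j)), ∏ k, (X 1 - C (b k))} :
          Set (MvPolynomial (Fin 2) K)) := by
  classical
  set Q₁ : Polynomial K := ∏ j, (Polynomial.X - Polynomial.C (a j)) with hQ₁
  set Q₂ : Polynomial K := ∏ k, (Polynomial.X - Polynomial.C (b k)) with hQ₂
  have hsep1 : Q₁.Separable := Polynomial.separable_prod_X_sub_C_iff.2 ha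
  have hsep2 : Q₂.Separable := Polynomial.separable_prod_X_sub_C_iff.2 hb
  set φ0 : Polynomial K →ₐ[K] MvPolynomial (Fin 2) K := Polynomial.aeval (X 0) with hφ0def
  set φ1 : Polynomial K →ₐ[K] MvPolynomial (Fin 2) K := Polynomial.aeval (X 1) with hφ1def
  set q₁ : MvPolynomial (Fin 2) K := ∏ j, (X 0 - C (a j)) with hq₁
  set q₂ : MvPolynomial (Fin 2) K := ∏ k, (X 1 - C (b k)) with hq₂
  have hφ0 : φ0 Q₁ = q₁ := by simp [hφ0def, hQ₁, hq₁]
  have hφ1 : φ1 Q₂ = q₂ := by simp [hφ1def, hQ₂, hq₂]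
  have hp₁ : pderiv (0 : Fin 2) q₁ = φ0 Q₁.derivative := by
    rw [← hφ0, hφ0def]; exact pderiv_aeval_X 0 Q₁
  have hp₂ : pderiv (1 : Fin 2) q₂ = φ1 Q₂.derivative := by
    rw [← hφ1, hφ1def]; exact pderiv_aeval_X 1 Q₂
  set I : Ideal (MvPolynomial (Fin 2) K) :=
    Ideal.span ({q₁, q₂} : Set (MvPolynomial (Fin 2) K)) with hI
  rw [← Ideal.Quotient.eq_zero_iff_mem] at hf ⊢
  have hq₁0 : Ideal.Quotient.mk I q₁ = 0 :=
    Ideal.Quotient.eq_zero_iff_mem.2 (Ideal.subset_span (by simp))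
  have hq₂0 : Ideal.Quotient.mk I q₂ = 0 :=
    Ideal.Quotient.eq_zero_iff_mem.2 (Ideal.subset_span (by simp))
  obtain ⟨u₁, v₁, h1⟩ := hsep1
  obtain ⟨u₂, v₂, h2⟩ := hsep2
  have e1 : Ideal.Quotient.mk I (φ0 v₁) * Ideal.Quotient.mk I (pderiv (0 : Fin 2) q₁) = 1 := by
    have h1' : Ideal.Quotient.mk I (φ0 (u₁ * Q₁ + v₁ * Q₁.derivative)) = 1 := by
      rw [h1]; simp
    rw [map_add, map_mul, map_mul, hφ0, map_add, map_mul, map_mul, hq₁0,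
      mul_zero, zero_add] at h1'
    rw [hp₁]; rw [← map_mul]; exact h1'
  have e2 : Ideal.Quotient.mk I (φ1 v₂) * Ideal.Quotient.mk I (pderiv (1 : Fin 2) q₂) = 1 := by
    have h2' : Ideal.Quotient.mk I (φ1 (u₂ * Q₂ + v₂ * Q₂.derivative)) = 1 := by
      rw [h2]; simp
    rw [map_add, map_mul, map_mul, hφ1, map_add, map_mul, map_mul, hq₂0,
      mul_zero, zero_add] at h2'
    rw [hp₂]; rw [← map_mul]; exact h2'
  calc Ideal.Quotient.mk I f
      = ((Ideal.Quotient.mk I (φ0 v₁) * Ideal.Quotient.mk I (pderiv (0 : Fin 2) q₁)) *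
         (Ideal.Quotient.mk I (φ1 v₂) * Ideal.Quotient.mk I (pderiv (1 : Fin 2) q₂))) ^ n *
        Ideal.Quotient.mk I f := by rw [e1, e2, one_mul, one_pow, one_mul]
    _ = (Ideal.Quotient.mk I (φ0 v₁) * Ideal.Quotient.mk I (φ1 v₂)) ^ n *
        Ideal.Quotient.mk I ((pderiv (0 : Fin 2) q₁ * pderiv (1 : Fin 2) q₂) ^ n * f) := by
          simp only [map_mul, map_pow]; ring
    _ = 0 := by rw [hf, mul_zero]
end

section
/- Let K be a field, a₁, …, a_{r₁} ∈ K pairwise distinct and b₁, …, b_{r₂} ∈ K pairwise distinct. In K[x,y] (MvPolynomial (Fin 2) K), set Q₁ := ∏_{j=1}^{r₁} (x − a_j) and Q₂ := ∏_{k=1}^{r₂} (y − b_k). Fix indices j₀ ∈ {1,…,r₁} and k₀ ∈ {1,…,r₂} and set g := (∏_{j ≠ j₀} (x − a_j)) · (∏_{k ≠ k₀} (y − b_k)). Then the saturation of the ideal (Q₁, Q₂) by g equals the ideal generated by x − a_{j₀} and y − b_{k₀}: that is, {f ∈ K[x,y] : ∃ n ∈ ℕ, g^n · f ∈ (Q₁,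 Q₂)} = (x − a_{j₀}, y − b_{k₀}). -/
open MvPolynomial

/-- Identity `[P_{1,j₀}, P_{2,k₀}] = (Q) : (∏_{j≠j₀} P_{1,j} ∏_{k≠k₀} P_{2,k})^∞`
from the proof of Lemma 2(i), b)⇒a): the saturation of the ideal of the squarefree
products `Q₁, Q₂` by the complementary product of factors is the maximal ideal
`(x - a_{j₀}, y - b_{k₀})`. -/
theorem saturation_span_products_eq
    (K : Type*) [Field K]
    (r₁ r₂ : ℕ) (a : Fin r₁ → K) (b : Fin r₂ → K)
    (ha : Function.Injective a) (hb : Function.Injective b)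
    (j₀ : Fin r₁) (k₀ : Fin r₂) :
    {f : MvPolynomial (Fin 2) K | ∃ n : ℕ,
        ((∏ j ∈ Finset.univ.erase j₀, (X 0 - C (a j))) *
         (∏ k ∈ Finset.univ.erase k₀, (X 1 - C (b k)))) ^ n * f ∈
        Ideal.span ({∏ j, (X 0 - C (a j)), ∏ k, (X 1 - C (b k))} :
          Set (MvPolynomial (Fin 2) K))} =
      ↑(Ideal.span ({X 0 - C (a j₀), X 1 - C (b k₀)} :
          Set (MvPolynomial (Fin 2) K))) := by
  classical
  set v : Fin 2 → K := ![a j₀, b k₀] with hv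
  set m : Ideal (MvPolynomial (Fin 2) K) :=
    Ideal.span ({X 0 - C (a j₀), X 1 - C (b k₀)} : Set (MvPolynomial (Fin 2) K)) with hm
  set I : Ideal (MvPolynomial (Fin 2) K) :=
    Ideal.span ({∏ j, (X 0 - C (a j)), ∏ k, (X 1 - C (b k))} :
      Set (MvPolynomial (Fin 2) K)) with hI
  set g : MvPolynomial (Fin 2) K :=
    (∏ j ∈ Finset.univ.erase j₀, (X 0 - C (a j))) *
      (∏ k ∈ Finset.univ.erase k₀, (X 1 - C (b k))) with hg
  have hgen : ∀ i : Fin 2, (X i - C (v i) : MvPolynomial (Fin 2) K) ∈ m := by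
    intro i
    fin_cases i
    · exact Ideal.subset_span (by simp [hv])
    · exact Ideal.subset_span (by simp [hv])
  have key : ∀ f : MvPolynomial (Fin 2) K, f - C (eval v f) ∈ m := by
    intro f
    induction f using MvPolynomial.induction_on with
    | C c => simp
    | add p q hp hq =>
      have := m.add_mem hp hq
      simpa [sub_add_sub_comm, map_add] using this
    | mul_X p i hp =>
      have h1 : p * X i - C (eval v (p * X i))
          = p * (X i - C (v i)) + (p - C (eval v p)) * C (v i) := by
        simp only [eval_mul, eval_X, map_mul]
        ring
      rw [h1]
      exact m.add_mem (m.mul_mem_left _ (hgen i)) (m.mul_mem_right _ hp)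
  have hker : m = RingHom.ker (eval v : MvPolynomial (Fin 2) K →+* K) := by
    apply le_antisymm
    · rw [hm, Ideal.span_le]
      rintro p (rfl | rfl) <;>
        simp [RingHom.mem_ker, hv]
    · intro f hf
      rw [RingHom.mem_ker] at hf
      have := key f
      rwa [hf, map_zero, sub_zero] at this
  have hprime : m.IsPrime := hker ▸ RingHom.ker_isPrime _
  have hIm : I ≤ m := by
    rw [hI, Ideal.span_le, hker]
    rintro p (rfl | rfl) <;> rw [SetLike.mem_coe, RingHom.mem_ker, map_prod]
    · exact Finset.prod_eq_zero (Finset.mem_univ j₀) (by simp [hv])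
    · exact Finset.prod_eq_zero (Finset.mem_univ k₀) (by simp [hv])
  have hgm : g ∉ m := by
    rw [hker, RingHom.mem_ker]
    intro h
    rw [hg, map_mul, map_prod, map_prod] at h
    rcases mul_eq_zero.1 h with h' | h' <;>
      rcases Finset.prod_eq_zero_iff.1 h' with ⟨i, hi, hi0⟩
    · simp only [map_sub, eval_X, eval_C, hv, Matrix.cons_val_zero, sub_eq_zero] at hi0
      exact (Finset.mem_erase.1 hi).1 (ha hi0.symm)
    · simp only [map_sub, eval_X, eval_C, hv, Matrix.cons_val_one, Matrix.head_cons,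
        sub_eq_zero] at hi0
      exact (Finset.mem_erase.1 hi).1 (hb hi0.symm)
  ext f
  simp only [Set.mem_setOf_eq, SetLike.mem_coe]
  constructor
  · rintro ⟨n, hn⟩
    have hfm : g ^ n * f ∈ m := hIm hn
    rcases hprime.mem_or_mem hfm with h | h
    · exact absurd (hprime.mem_of_pow_mem _ h) hgm
    · exact h
  · intro hf
    rcases Ideal.mem_span_pair.1 hf with ⟨u, w, huw⟩
    refine ⟨1, ?_⟩
    have hQ1 : (∏ j ∈ Finset.univ.erase j₀, (X 0 - C (a j))) * (X 0 - C (a j₀))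
        = (∏ j, (X 0 - C (a j)) : MvPolynomial (Fin 2) K) :=
      Finset.prod_erase_mul _ _ (Finset.mem_univ j₀)
    have hQ2 : (∏ k ∈ Finset.univ.erase k₀, (X 1 - C (b k))) * (X 1 - C (b k₀))
        = (∏ k, (X 1 - C (b k)) : MvPolynomial (Fin 2) K) :=
      Finset.prod_erase_mul _ _ (Finset.mem_univ k₀)
    have h1 : g ^ 1 * f
        = (u * ∏ k ∈ Finset.univ.erase k₀, (X 1 - C (b k))) * (∏ j, (X 0 - C (a j)))
          + (w * ∏ j ∈ Finset.univ.erase j₀, (X 0 - C (a j))) * (∏ k, (X 1 - C (b k))) := by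
      rw [← hQ1, ← hQ2, pow_one, hg, ← huw]
      ring
    rw [h1]
    exact I.add_mem
      (I.mul_mem_left _ (Ideal.subset_span (by simp)))
      (I.mul_mem_left _ (Ideal.subset_span (by simp)))
end
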